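/- Let d ≥ 1, τ > 0, γ > 0, r > 0, 0 < ϱ ≤ 1 and K ≥ 1. Let ω ∈ ℝ^d satisfy |⟨k,ω⟩| ≥ γ/|k|^τ for every k ∈ ℤ^d with 0 < |k| ≤ K. Given complex coefficients (P_k)_{0<|k|≤K}, set P(θ) = Σ_{0<|k|≤K} P_k e^{i⟨k,θ⟩} and F(θ) = Σ_{0<|k|≤K} (i P_k/⟨k,ω⟩) e^{i⟨k,θ⟩}. Then F is the unique trigonometric polynomial with modes 0 < |k| ≤ K and zero mean solving the homological equation ∂_ω F + P = 0, where ∂_ω F = Σ_{j=1}^d ω_j ∂_{θ_j} F, and its coefficients satisfy Σ_{0<|k|≤K} |F_k| e^{|k|(r−ϱ)} ≤ γ^{−1} (τ/(eϱ))^τ Σ_{0<|k|≤K} |P_k| e^{|k| r}. -/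

import Mathlib

open scoped Classical

/-- The trigonometric sum `θ ↦ Σ_k c_k e^{i⟨k,θ⟩}` of a coefficient family. -/
noncomputable def trigSum {d : ℕ} (c : (Fin d → ℤ) → ℂ) (θ : Fin d → ℝ) : ℂ :=
  ∑' k : Fin d → ℤ, c k * Complex.exp (Complex.I * ∑ j, (k j : ℂ) * (θ j : ℂ))

/-- The coefficients `F_k = i P_k / ⟨k,ω⟩` (for `0 < |k| ≤ K`) of the solution of the
homological equation `∂_ω F + P = 0`. -/
noncomputable def homSolZero {d : ℕ} (K : ℝ) (ω : Fin d → ℝ)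
    (P : (Fin d → ℤ) → ℂ) (k : Fin d → ℤ) : ℂ :=
  if 0 < (∑ j, |k j|) ∧ ((∑ j, |k j| : ℤ) : ℝ) ≤ K then
    Complex.I * P k / (((∑ j, (k j : ℝ) * ω j : ℝ)) : ℂ)
  else 0


namespace HomEqAux

variable {d : ℕ}

noncomputable def phaseL (k : Fin d → ℤ) : (Fin d → ℝ) →L[ℝ] ℂ :=
  ∑ j, (k j : ℂ) • (Complex.ofRealCLM.comp (ContinuousLinearMap.proj j))

lemma phaseL_apply (k : Fin d → ℤ) (θ : Fin d → ℝ) :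
    phaseL k θ = ∑ j, (k j : ℂ) * (θ j : ℂ) := by
  simp [phaseL, smul_eq_mul]

lemma phaseL_real (k : Fin d → ℤ) (ω : Fin d → ℝ) :
    phaseL k ω = ((∑ j, (k j : ℝ) * ω j : ℝ) : ℂ) := by
  rw [phaseL_apply]; push_cast; ring

noncomputable def modeSet (d : ℕ) (K : ℝ) : Finset (Fin d → ℤ) :=
  (Fintype.piFinset fun _ : Fin d => Finset.Icc (-⌈K⌉) ⌈K⌉).filter
    fun k => 0 < (∑ j, |k j|) ∧ ((∑ j, |k j| : ℤ) : ℝ) ≤ K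

lemma mem_modeSet {K : ℝ} (k : Fin d → ℤ) :
    k ∈ modeSet d K ↔ (0 < (∑ j, |k j|) ∧ ((∑ j, |k j| : ℤ) : ℝ) ≤ K) := by
  constructor
  · exact fun h => (Finset.mem_filter.1 h).2
  · intro h
    refine Finset.mem_filter.2 ⟨Fintype.mem_piFinset.2 fun j => ?_, h⟩
    have h1 : |k j| ≤ ∑ i, |k i| :=
      Finset.single_le_sum (fun i _ => abs_nonneg (k i)) (Finset.mem_univ j)
    have h2 : (∑ i, |k i|) ≤ ⌈K⌉ := by
      calc (∑ i, |k i|) = ⌈((∑ i, |k i| : ℤ) : ℝ)⌉ := (Int.ceil_intCast _).symm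
        _ ≤ ⌈K⌉ := Int.ceil_le_ceil h.2
    exact Finset.mem_Icc.2 (abs_le.mp (h1.trans h2))

lemma trigSum_eq_sum {K : ℝ} (c : (Fin d → ℤ) → ℂ)
    (hc : ∀ k, k ∉ modeSet d K → c k = 0) (θ : Fin d → ℝ) :
    trigSum c θ = ∑ k ∈ modeSet d K, c k * Complex.exp (Complex.I * phaseL k θ) := by
  rw [trigSum, tsum_eq_sum (s := modeSet d K) (fun k hk => by rw [hc k hk, zero_mul])]
  exact Finset.sum_congr rfl fun k _ => by rw [phaseL_apply]

lemma hasFDerivAt_sum (T : Finset (Fin d → ℤ)) (c : (Fin d → ℤ) → ℂ) (θ : Fin d → ℝ) :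
    HasFDerivAt (fun θ : Fin d → ℝ => ∑ k ∈ T, c k * Complex.exp (Complex.I * phaseL k θ))
      (∑ k ∈ T, (c k * Complex.exp (Complex.I * phaseL k θ)) • (Complex.I • phaseL k)) θ := by
  refine HasFDerivAt.fun_sum fun k _ => ?_
  have h1 : HasFDerivAt (fun θ : Fin d → ℝ => Complex.I * phaseL k θ)
      (Complex.I • phaseL k) θ := by
    exact (Complex.I • phaseL k).hasFDerivAt (x := θ)
  have h3 := h1.cexp.const_mul (c k)
  exact h3.congr_fderiv (mul_smul _ _ _).symm

lemma fderiv_trigSum_apply {K : ℝ} (c : (Fin d → ℤ) → ℂ)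
    (hc : ∀ k, k ∉ modeSet d K → c k = 0) (θ ω : Fin d → ℝ) :
    fderiv ℝ (trigSum c) θ ω
      = ∑ k ∈ modeSet d K,
          c k * Complex.exp (Complex.I * phaseL k θ) * (Complex.I * phaseL k ω) := by
  have hfun : trigSum c
      = fun θ => ∑ k ∈ modeSet d K, c k * Complex.exp (Complex.I * phaseL k θ) :=
    funext (trigSum_eq_sum c hc)
  rw [hfun, (hasFDerivAt_sum _ c θ).fderiv]
  simp [ContinuousLinearMap.sum_apply, smul_eq_mul, mul_assoc]

end HomEqAux
namespace HomEqAux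

variable {d : ℕ}

noncomputable def chi (k : Fin d → ℤ) : Multiplicative (Fin d → ℝ) →* ℂ where
  toFun θ := Complex.exp (Complex.I * phaseL k (Multiplicative.toAdd θ))
  map_one' := by simp
  map_mul' θ η := by
    simp [toAdd_mul, map_add, mul_add, Complex.exp_add]

lemma chi_injective : Function.Injective (chi (d := d)) := by
  intro k k' h
  funext j
  have hθ := DFunLike.congr_fun h (Multiplicative.ofAdd (Pi.single j (1 : ℝ)))
  have hsingle : ∀ m : Fin d → ℤ,
      phaseL m ((Multiplicative.toAdd (Multiplicative.ofAdd (Pi.single j (1:ℝ))))) = (m j : ℂ) := by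
    intro m
    rw [toAdd_ofAdd, phaseL_apply]
    simp [Pi.single_apply, apply_ite Complex.ofReal]
  rw [show (chi k) (Multiplicative.ofAdd (Pi.single j (1:ℝ)))
      = Complex.exp (Complex.I * (k j : ℂ)) by rw [chi]; simp only [MonoidHom.coe_mk, OneHom.coe_mk]; rw [hsingle],
    show (chi k') (Multiplicative.ofAdd (Pi.single j (1:ℝ)))
      = Complex.exp (Complex.I * (k' j : ℂ)) by rw [chi]; simp only [MonoidHom.coe_mk, OneHom.coe_mk]; rw [hsingle]] at hθ
  obtain ⟨n, hn⟩ := Complex.exp_eq_exp_iff_exists_int.1 hθ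
  have him := congrArg Complex.im hn
  simp [Complex.mul_im, Complex.add_im, Complex.mul_re] at him
  -- him : (k j : ℝ) = (k' j : ℝ) + n * (2 * π) (roughly)
  have hn0 : n = 0 := by
    by_contra h0
    have hpi : Real.pi = ((k j : ℝ) - (k' j : ℝ)) / (2 * n) := by
      field_simp
      linarith [him]
    have : ((((k j - k' j : ℤ) : ℚ) / (2 * (n : ℚ)) : ℚ) : ℝ) = Real.pi := by
      rw [hpi]; push_cast; ring
    exact Rat.not_irrational _ (this ▸ irrational_pi)
  rw [hn0] at him
  exact_mod_cast (by push_cast at him ⊢; linarith : (k j : ℝ) = (k' j : ℝ))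

end HomEqAux
namespace HomEqAux

lemma rpow_mul_exp_le (τ ϱ x : ℝ) (hτ : 0 < τ) (hϱ : 0 < ϱ) (hx : 0 < x) :
    x ^ τ * Real.exp (-(ϱ * x)) ≤ (τ / (Real.exp 1 * ϱ)) ^ τ := by
  have hbase : (0:ℝ) < τ / (Real.exp 1 * ϱ) := div_pos hτ (mul_pos (Real.exp_pos 1) hϱ)
  rw [Real.rpow_def_of_pos hx, Real.rpow_def_of_pos hbase, ← Real.exp_add, Real.exp_le_exp]
  have hlog : Real.log (x * ϱ / τ) ≤ x * ϱ / τ - 1 :=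
    Real.log_le_sub_one_of_pos (by positivity)
  have hlx : Real.log (x * ϱ / τ) = Real.log x + Real.log ϱ - Real.log τ := by
    rw [Real.log_div (by positivity) (ne_of_gt hτ), Real.log_mul (ne_of_gt hx) (ne_of_gt hϱ)]
  have hlb : Real.log (τ / (Real.exp 1 * ϱ)) = Real.log τ - 1 - Real.log ϱ := by
    rw [Real.log_div (ne_of_gt hτ) (by positivity),
      Real.log_mul (ne_of_gt (Real.exp_pos 1)) (ne_of_gt hϱ), Real.log_exp]; ring
  rw [hlb]
  have h2 : τ * (Real.log x + Real.log ϱ - Real.log τ) ≤ τ * (x * ϱ / τ - 1) :=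
    mul_le_mul_of_nonneg_left (by rw [← hlx]; exact hlog) hτ.le
  have h3 : τ * (x * ϱ / τ) = x * ϱ := by field_simp
  nlinarith [h2, h3]

end HomEqAux

/-- the zero-order (Diophantine) homological equation `∂_ω F + P = 0`:
`F_k = iP_k/⟨k,ω⟩` gives the unique zero-mean trigonometric polynomial solution with
modes `0 < |k| ≤ K`, with the small-divisor estimate
`Σ |F_k| e^{|k|(r−ϱ)} ≤ γ⁻¹ (τ/(eϱ))^τ Σ |P_k| e^{|k|r}`. -/
theorem homological_equation_zero_order (d : ℕ) (hd : 1 ≤ d)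
    (τ γ r ϱ K : ℝ) (hτ : 0 < τ) (hγ : 0 < γ) (hr : 0 < r)
    (hϱ0 : 0 < ϱ) (hϱ1 : ϱ ≤ 1) (hK : 1 ≤ K)
    (ω : Fin d → ℝ)
    (hdio : ∀ k : Fin d → ℤ, 0 < (∑ j, |k j|) → ((∑ j, |k j| : ℤ) : ℝ) ≤ K →
      γ / ((∑ j, |k j| : ℤ) : ℝ) ^ τ ≤ |∑ j, (k j : ℝ) * ω j|)
    (P : (Fin d → ℤ) → ℂ)
    (hPsupp : ∀ k : Fin d → ℤ,
      ¬(0 < (∑ j, |k j|) ∧ ((∑ j, |k j| : ℤ) : ℝ) ≤ K) → P k = 0) :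
    (∀ θ : Fin d → ℝ,
      fderiv ℝ (trigSum (homSolZero K ω P)) θ ω + trigSum P θ = 0) ∧
    (∀ G : (Fin d → ℤ) → ℂ,
      (∀ k : Fin d → ℤ,
        ¬(0 < (∑ j, |k j|) ∧ ((∑ j, |k j| : ℤ) : ℝ) ≤ K) → G k = 0) →
      (∀ θ : Fin d → ℝ, fderiv ℝ (trigSum G) θ ω + trigSum P θ = 0) →
      G = homSolZero K ω P) ∧
    Summable (fun k : Fin d → ℤ =>
      ‖homSolZero K ω P k‖ *
        Real.exp (((∑ j, |k j| : ℤ) : ℝ) * (r - ϱ))) ∧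
    (∑' k : Fin d → ℤ,
      ‖homSolZero K ω P k‖ *
        Real.exp (((∑ j, |k j| : ℤ) : ℝ) * (r - ϱ)))
      ≤ γ⁻¹ * (τ / (Real.exp 1 * ϱ)) ^ τ *
        ∑' k : Fin d → ℤ, ‖P k‖ * Real.exp (((∑ j, |k j| : ℤ) : ℝ) * r) := by
  classical
  set T := HomEqAux.modeSet d K with hT
  have hFif : ∀ k : Fin d → ℤ, k ∈ T → homSolZero K ω P k
      = Complex.I * P k / (((∑ j, (k j : ℝ) * ω j : ℝ)) : ℂ) := fun k hk =>
    if_pos ((HomEqAux.mem_modeSet k).1 hk)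
  have hFsupp : ∀ k, k ∉ T → homSolZero K ω P k = 0 := fun k hk =>
    if_neg fun hc => hk ((HomEqAux.mem_modeSet k).2 hc)
  have hPsupp' : ∀ k, k ∉ T → P k = 0 := fun k hk =>
    hPsupp k fun hc => hk ((HomEqAux.mem_modeSet k).2 hc)
  have hmfacts : ∀ k ∈ T, (1:ℝ) ≤ ((∑ j, |k j| : ℤ) : ℝ) ∧
      γ / ((∑ j, |k j| : ℤ) : ℝ) ^ τ ≤ |∑ j, (k j : ℝ) * ω j| ∧
      (∑ j, (k j : ℝ) * ω j) ≠ 0 := by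
    intro k hk
    obtain ⟨h1, h2⟩ := (HomEqAux.mem_modeSet k).1 hk
    have hn1 : (1:ℝ) ≤ ((∑ j, |k j| : ℤ) : ℝ) := by exact_mod_cast h1
    have hdk := hdio k h1 h2
    have hpos : 0 < γ / ((∑ j, |k j| : ℤ) : ℝ) ^ τ :=
      div_pos hγ (Real.rpow_pos_of_pos (lt_of_lt_of_le one_pos hn1) τ)
    exact ⟨hn1, hdk, abs_pos.1 (lt_of_lt_of_le hpos hdk)⟩
  refine ⟨?_, ?_, ?_, ?_⟩
  · -- existence
    intro θ
    rw [HomEqAux.fderiv_trigSum_apply (K := K) _ hFsupp,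
      HomEqAux.trigSum_eq_sum (K := K) P hPsupp', ← Finset.sum_add_distrib]
    refine Finset.sum_eq_zero fun k hk => ?_
    obtain ⟨hn1, hdk, hm0⟩ := hmfacts k hk
    have hmC : ((∑ j, (k j : ℝ) * ω j : ℝ) : ℂ) ≠ 0 := Complex.ofReal_ne_zero.2 hm0
    rw [hFif k hk, HomEqAux.phaseL_real k ω]
    set e := Complex.exp (Complex.I * HomEqAux.phaseL k θ)
    set m := ((∑ j, (k j : ℝ) * ω j : ℝ) : ℂ)
    have hkey : Complex.I * P k / m * (Complex.I * m) = -P k := by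
      field_simp
      linear_combination (P k) * Complex.I_sq
    linear_combination e * hkey
  · -- uniqueness
    intro G hGsupp hGeq
    have hGsupp' : ∀ k, k ∉ T → G k = 0 := fun k hk =>
      hGsupp k fun hc => hk ((HomEqAux.mem_modeSet k).2 hc)
    have hzero : ∀ k ∈ T,
        G k * (Complex.I * ((∑ j, (k j : ℝ) * ω j : ℝ) : ℂ)) + P k = 0 := by
      have hli := (linearIndependent_monoidHom (Multiplicative (Fin d → ℝ)) ℂ).comp
        (HomEqAux.chi (d := d)) HomEqAux.chi_injective
      refine linearIndependent_iff'.1 hli T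
        (fun k => G k * (Complex.I * ((∑ j, (k j : ℝ) * ω j : ℝ) : ℂ)) + P k) ?_
      funext θm
      have hθ := hGeq (Multiplicative.toAdd θm)
      rw [HomEqAux.fderiv_trigSum_apply (K := K) G hGsupp',
        HomEqAux.trigSum_eq_sum (K := K) P hPsupp', ← Finset.sum_add_distrib] at hθ
      rw [Finset.sum_apply]
      simp only [Pi.smul_apply, Function.comp_apply, smul_eq_mul, Pi.zero_apply]
      rw [← hθ]
      refine Finset.sum_congr rfl fun k hk => ?_
      have hc : (HomEqAux.chi k) θm
          = Complex.exp (Complex.I * HomEqAux.phaseL k (Multiplicative.toAdd θm)) := rfl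
      rw [hc, HomEqAux.phaseL_real k ω]
      ring
    funext k
    by_cases hk : k ∈ T
    · obtain ⟨hn1, hdk, hm0⟩ := hmfacts k hk
      have hmC : ((∑ j, (k j : ℝ) * ω j : ℝ) : ℂ) ≠ 0 := Complex.ofReal_ne_zero.2 hm0
      rw [hFif k hk, eq_div_iff hmC]
      linear_combination (-Complex.I) * hzero k hk
        + (G k * ((∑ j, (k j : ℝ) * ω j : ℝ) : ℂ)) * Complex.I_sq
    · rw [hGsupp' k hk, hFsupp k hk]
  · -- summability
    exact summable_of_ne_finset_zero (s := T) fun k hk => by rw [hFsupp k hk]; simp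
  · -- estimate
    rw [tsum_eq_sum (s := T) (fun k hk => by rw [hFsupp k hk]; simp),
      tsum_eq_sum (s := T) (fun k hk => by rw [hPsupp' k hk]; simp), Finset.mul_sum]
    refine Finset.sum_le_sum fun k hk => ?_
    obtain ⟨hn1, hdk, hm0⟩ := hmfacts k hk
    set n := ((∑ j, |k j| : ℤ) : ℝ) with hn
    have hnpos : (0:ℝ) < n := lt_of_lt_of_le one_pos hn1
    have habs : (0:ℝ) < |∑ j, (k j : ℝ) * ω j| :=
      lt_of_lt_of_le (div_pos hγ (Real.rpow_pos_of_pos hnpos τ)) hdk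
    rw [hFif k hk, norm_div, norm_mul, Complex.norm_I, one_mul, Complex.norm_real, Real.norm_eq_abs]
    have hinv : |∑ j, (k j : ℝ) * ω j|⁻¹ ≤ n ^ τ / γ := by
      rw [show n ^ τ / γ = (γ / n ^ τ)⁻¹ by rw [inv_div]]
      exact inv_anti₀ (div_pos hγ (Real.rpow_pos_of_pos hnpos τ)) hdk
    have hA : ‖P k‖ / |∑ j, (k j : ℝ) * ω j| * Real.exp (n * (r - ϱ))
        ≤ ‖P k‖ * (n ^ τ / γ) * Real.exp (n * (r - ϱ)) := by
      apply mul_le_mul_of_nonneg_right _ (Real.exp_nonneg _)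
      rw [div_eq_mul_inv]
      exact mul_le_mul_of_nonneg_left hinv (norm_nonneg _)
    have hB : ‖P k‖ * (n ^ τ / γ) * Real.exp (n * (r - ϱ))
        = γ⁻¹ * (n ^ τ * Real.exp (-(ϱ * n))) * (‖P k‖ * Real.exp (n * r)) := by
      rw [show n * (r - ϱ) = n * r + -(ϱ * n) by ring, Real.exp_add]
      ring
    have hC : γ⁻¹ * (n ^ τ * Real.exp (-(ϱ * n))) * (‖P k‖ * Real.exp (n * r))
        ≤ γ⁻¹ * (τ / (Real.exp 1 * ϱ)) ^ τ * (‖P k‖ * Real.exp (n * r)) := by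
      apply mul_le_mul_of_nonneg_right _ (by positivity)
      exact mul_le_mul_of_nonneg_left
        (HomEqAux.rpow_mul_exp_le τ ϱ n hτ hϱ0 hnpos) (inv_nonneg.2 hγ.le)
    calc ‖P k‖ / |∑ j, (k j : ℝ) * ω j| * Real.exp (n * (r - ϱ))
        ≤ ‖P k‖ * (n ^ τ / γ) * Real.exp (n * (r - ϱ)) := hA
      _ = γ⁻¹ * (n ^ τ * Real.exp (-(ϱ * n))) * (‖P k‖ * Real.exp (n * r)) := hB
      _ ≤ γ⁻¹ * (τ / (Real.exp 1 * ϱ)) ^ τ * (‖P k‖ * Real.exp (n * r)) := hC
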